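/- Norm subadditivity for exponential normal forms: for k ≥ 2, ‖m+1‖_k ≤ ‖m‖_k + 3, where ‖m‖_k is the number of symbols in the hereditary base-k representation (counting 0 as one symbol, and each + and each k^(·) as one symbol). -/

import Mathlib

/-- Norm of the hereditary base-`k` exponential normal form of `m`:
`‖0‖ = 1` and `‖k^r + b‖ = ‖r‖ + ‖b‖ + 2` where `k^r ≤ m < k^(r+1)`. -/
def enorm (k m : ℕ) : ℕ :=
  if h : m = 0 ∨ k < 2 then 1
  else enorm k (Nat.log k m) + enorm k (m - k ^ Nat.log k m) + 2
termination_by m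
decreasing_by
  · push_neg at h
    exact Nat.log_lt_self k h.1
  · push_neg at h
    exact Nat.sub_lt (Nat.pos_of_ne_zero h.1) (pow_pos (by omega) _)

theorem enorm_one_le (k n : ℕ) : 1 ≤ enorm k n := by
  rw [enorm.eq_1]; split <;> omega

theorem enorm_eq (k m : ℕ) (hk : 2 ≤ k) (hm : m ≠ 0) :
    enorm k m = enorm k (Nat.log k m) + enorm k (m - k ^ Nat.log k m) + 2 := by
  rw [enorm.eq_1]; rw [dif_neg (by omega)]

/-- Norm subadditivity for exponential normal forms: `‖m+1‖_k ≤ ‖m‖_k + 3`. -/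
theorem enorm_succ_le (k m : ℕ) (hk : 2 ≤ k) :
    enorm k (m + 1) ≤ enorm k m + 3 := by
  induction m using Nat.strong_induction_on with
  | _ m ih =>
    rcases Nat.eq_zero_or_pos m with rfl | hm
    · have h0 : enorm k 0 = 1 := by rw [enorm.eq_1]; simp
      have h1 : enorm k 1 = 4 := by
        rw [enorm_eq k 1 hk one_ne_zero]
        simp [Nat.log_one_right, h0]
      simp [h1, h0]
    set r := Nat.log k m with hr
    have h1 : k ^ r ≤ m := Nat.pow_log_le_self k hm.ne'
    have h2 : m < k ^ (r + 1) := Nat.lt_pow_succ_log_self (by omega) m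
    have hem : enorm k m = enorm k r + enorm k (m - k ^ r) + 2 :=
      enorm_eq k m hk hm.ne'
    have hkr : 1 ≤ k ^ r := Nat.one_le_pow _ _ (by omega)
    by_cases hc : m + 1 = k ^ (r + 1)
    · have hlog : Nat.log k (m + 1) = r + 1 := by
        rw [hc, Nat.log_pow (by omega)]
      have he : enorm k (m + 1) = enorm k (r + 1) + enorm k 0 + 2 := by
        rw [enorm_eq k (m + 1) hk (by omega), hlog, hc, Nat.sub_self]
      have hIH : enorm k (r + 1) ≤ enorm k r + 3 :=
        ih r (Nat.log_lt_self k hm.ne')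
      have := enorm_one_le k (m - k ^ r)
      have h0 : enorm k 0 = 1 := by rw [enorm.eq_1]; simp
      omega
    · have hlt : m + 1 < k ^ (r + 1) := by omega
      have hlog : Nat.log k (m + 1) = r :=
        Nat.log_eq_of_pow_le_of_lt_pow (by omega) hlt
      have he : enorm k (m + 1) = enorm k r + enorm k (m - k ^ r + 1) + 2 := by
        have heq : m + 1 - k ^ r = m - k ^ r + 1 := by omega
        rw [enorm_eq k (m + 1) hk (by omega), hlog, heq]
      have hIH : enorm k (m - k ^ r + 1) ≤ enorm k (m - k ^ r) + 3 :=
        ih (m - k ^ r) (by omega)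
      omega
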